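/- arXiv:2507.15726 — 7 statements merged into one kernel-verified Lean document; each statement's English description precedes it below -/
import Mathlib

section
/- The evaluation map q ↦ q(1) induces a group isomorphism Quad(ℤ/nℤ, M) ≅ M[gcd(2n, n²)], where M[d] = {m ∈ M : d·m = 0} is the d-torsion subgroup. -/
/-- A function of two variables is biadditive if it is additive in each argument. -/
def IsBiadd {A B M : Type*} [AddCommGroup A] [AddCommGroup B] [AddCommGroup M]
    (f : A → B → M) : Prop :=
  (∀ a a' b, f (a + a') b = f a b + f a' b) ∧
  (∀ a b b', f a (b + b') = f a b + f a b')

/-- A quadratic form: even, with biadditive polar form. -/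
def IsQuadratic {G M : Type*} [AddCommGroup G] [AddCommGroup M] (q : G → M) : Prop :=
  (∀ a, q (-a) = q a) ∧
  IsBiadd (fun a b => q (a + b) - q a - q b)

/-- A 2-abelian 3-cocycle: a 3-cocycle `h` together with `c` satisfying the
hexagon compatibility conditions. -/
def IsAb3Cocycle {G M : Type*} [AddCommGroup G] [AddCommGroup M]
    (h : G → G → G → M) (c : G → G → M) : Prop :=
  (∀ a b d e, h a b d + h a (b + d) e + h b d e = h (a + b) d e + h a b (d + e)) ∧
  (∀ x y z, h y z x + c x (y + z) + h x y z = c x z + h y x z + c x y) ∧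
  (∀ x y z, -h z x y + c (x + y) z - h x y z = c x z - h x z y + c y z)
/-- The group of quadratic forms `G → M` under pointwise addition. -/
def QuadGroup (G M : Type*) [AddCommGroup G] [AddCommGroup M] : AddSubgroup (G → M) where
  carrier := {q | IsQuadratic q}
  zero_mem' := ⟨fun _ => rfl, by constructor <;> intros <;> simp⟩
  add_mem' := by
    rintro p q ⟨hp1, hp2, hp3⟩ ⟨hq1, hq2, hq3⟩
    refine ⟨fun a => by simp [hp1 a, hq1 a], fun a a' b => ?_, fun a b b' => ?_⟩
    · have h3 := congrArg₂ (· + ·) (hp2 a a' b) (hq2 a a' b)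
      simp only [Pi.add_apply] at h3 ⊢
      rw [← sub_eq_zero] at h3 ⊢
      rw [← h3]
      abel
    · have h3 := congrArg₂ (· + ·) (hp3 a b b') (hq3 a b b')
      simp only [Pi.add_apply] at h3 ⊢
      rw [← sub_eq_zero] at h3 ⊢
      rw [← h3]
      abel
  neg_mem' := by
    rintro p ⟨hp1, hp2, hp3⟩
    refine ⟨fun a => by simp [hp1 a], fun a a' b => ?_, fun a b b' => ?_⟩
    · have h3 := congrArg Neg.neg (hp2 a a' b)
      simp only [Pi.neg_apply] at h3 ⊢
      rw [← sub_eq_zero] at h3 ⊢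
      rw [← h3]
      abel
    · have h3 := congrArg Neg.neg (hp3 a b b')
      simp only [Pi.neg_apply] at h3 ⊢
      rw [← sub_eq_zero] at h3 ⊢
      rw [← h3]
      abel

/-- The `d`-torsion subgroup `M[d] = {m : d • m = 0}`. -/
def torsionBy (M : Type*) [AddCommGroup M] (d : ℕ) : AddSubgroup M where
  carrier := {m | d • m = 0}
  zero_mem' := by simp
  add_mem' := by
    intro a b ha hb
    simp only [Set.mem_setOf_eq, smul_add] at *
    rw [ha, hb, add_zero]
  neg_mem' := by
    intro a ha
    simp only [Set.mem_setOf_eq, smul_neg] at *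
    rw [ha, neg_zero]

/-- The group of biadditive maps `G₁ × G₂ → M` (curried) under pointwise addition. -/
def BilGroup (G₁ G₂ M : Type*) [AddCommGroup G₁] [AddCommGroup G₂] [AddCommGroup M] :
    AddSubgroup (G₁ → G₂ → M) where
  carrier := {f | IsBiadd f}
  zero_mem' := by constructor <;> intros <;> simp
  add_mem' := by
    rintro p q ⟨hp1, hp2⟩ ⟨hq1, hq2⟩
    constructor <;> intros <;> simp only [Pi.add_apply] <;>
      [rw [hp1, hq1]; rw [hp2, hq2]] <;> abel
  neg_mem' := by
    rintro p ⟨hp1, hp2⟩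
    constructor <;> intros <;> simp only [Pi.neg_apply] <;> [rw [hp1]; rw [hp2]] <;> abel


section AuxQuad

variable {G M : Type*} [AddCommGroup G] [AddCommGroup M]

lemma aux_key_sq {m : M} {n : ℕ}
    (h1 : (2*(n:ℤ)) • m = 0) (h2 : ((n:ℤ)*(n:ℤ)) • m = 0)
    {x y : ℤ} (h : (n:ℤ) ∣ x - y) : x^2 • m = y^2 • m := by
  obtain ⟨t, ht⟩ := h
  have hx : x = y + n*t := by linarith
  subst hx
  rw [show (y + (n:ℤ)*t)^2 = y^2 + (y*t)*(2*(n:ℤ)) + (t*t)*((n:ℤ)*(n:ℤ)) by ring,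
    add_smul, add_smul, mul_smul (y*t) (2*(n:ℤ)) m, mul_smul (t*t) ((n:ℤ)*(n:ℤ)) m,
    h1, h2, smul_zero, smul_zero, add_zero, add_zero]

lemma aux_key_lin {m : M} {n : ℕ}
    (h1 : (2*(n:ℤ)) • m = 0)
    {x y : ℤ} (c : ℤ) (h : (n:ℤ) ∣ x - y) : (2*x*c) • m = (2*y*c) • m := by
  obtain ⟨t, ht⟩ := h
  have hx : x = y + n*t := by linarith
  subst hx
  rw [show 2*(y + (n:ℤ)*t)*c = 2*y*c + (t*c)*(2*(n:ℤ)) by ring,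
    add_smul, mul_smul (t*c) (2*(n:ℤ)) m, h1, smul_zero, add_zero]

lemma aux_valdvd {n : ℕ} [NeZero n] (x : ℤ) (a : ZMod n) (h : (x : ZMod n) = a) :
    (n:ℤ) ∣ (a.val:ℤ) - x := by
  rw [← ZMod.intCast_zmod_eq_zero_iff_dvd]
  push_cast
  simp [ZMod.natCast_val, ZMod.cast_id, h]

lemma aux_q0 {q : G → M} (hq : IsQuadratic q) : q 0 = 0 := by
  have h := hq.2.1 0 0 0
  simp only [add_zero, zero_add] at h
  have h2 : q 0 - q 0 - q 0 = 0 := left_eq_add.mp h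
  simpa using h2

lemma aux_polar11 {q : G → M} (hq : IsQuadratic q) (g : G) :
    q (g + g) - q g - q g = 2 • q g := by
  have h' := hq.2.2 g (-g) g
  simp only [neg_add_cancel, add_neg_cancel, add_zero, aux_q0 hq, hq.1 g, two_smul] at h' ⊢
  abel_nf at h' ⊢
  rw [← sub_eq_zero]
  abel_nf
  exact h'.symm

lemma aux_quad_val {n : ℕ} {q : ZMod n → M} (hq : IsQuadratic q) (k : ℕ) :
    q (k : ZMod n) = (k^2) • q 1 := by
  have hf : ∀ k : ℕ, q ((k:ZMod n) + 1) - q (k:ZMod n) - q 1 = (2*k) • q 1 := by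
    intro k
    induction k with
    | zero => simp [aux_q0 hq]
    | succ k ih =>
        have h := hq.2.1 (k:ZMod n) 1 1
        simp only at h
        rw [ih, aux_polar11 hq 1] at h
        push_cast
        rw [h]
        rw [show 2*(k+1) = 2*k + 2 by ring, add_smul]
  induction k with
  | zero => simp [aux_q0 hq]
  | succ k ih =>
      have h := hf k
      have : q ((k:ZMod n) + 1) = (k^2) • q 1 + q 1 + (2*k) • q 1 := by
        rw [← ih]; rw [sub_sub, sub_eq_iff_eq_add] at h; rw [h]; abel
      push_cast
      rw [this, show (k+1)^2 = k^2 + 2*k + 1 by ring, add_smul, add_smul, one_smul]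
      abel

lemma aux_torsion {n : ℕ} (hn : 0 < n) {q : ZMod n → M} (hq : IsQuadratic q) :
    Nat.gcd (2*n) (n^2) • q 1 = 0 := by
  have hn2 : (n^2) • q 1 = 0 := by
    have h := aux_quad_val hq n
    rw [ZMod.natCast_self, aux_q0 hq] at h
    exact h.symm
  have h2n : (2*n) • q 1 = 0 := by
    have h := aux_quad_val hq (n+1)
    rw [show (((n+1 : ℕ)) : ZMod n) = 1 by push_cast [ZMod.natCast_self]; ring] at h
    rw [show (n+1)^2 = 2*n + (n^2 + 1) by ring, add_smul, add_smul, one_smul, hn2,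
      zero_add] at h
    exact (right_eq_add.mp h)
  exact addOrderOf_dvd_iff_nsmul_eq_zero.mp
    (Nat.dvd_gcd (addOrderOf_dvd_of_nsmul_eq_zero h2n) (addOrderOf_dvd_of_nsmul_eq_zero hn2))

lemma aux_qm_quad {n : ℕ} [NeZero n] {m : M}
    (h1 : (2*(n:ℤ)) • m = 0) (h2 : ((n:ℤ)*(n:ℤ)) • m = 0) :
    IsQuadratic (fun a : ZMod n => ((a.val:ℤ)^2) • m) := by
  have polar : ∀ a b : ZMod n,
      (((a+b).val:ℤ)^2) • m - ((a.val:ℤ)^2) • m - ((b.val:ℤ)^2) • m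
        = (2*(a.val:ℤ)*(b.val:ℤ)) • m := by
    intro a b
    have hd : (n:ℤ) ∣ ((a+b).val:ℤ) - ((a.val:ℤ)+(b.val:ℤ)) :=
      aux_valdvd _ _ (by push_cast; simp [ZMod.natCast_val, ZMod.cast_id])
    rw [aux_key_sq h1 h2 hd, ← sub_smul, ← sub_smul]
    congr 1; ring
  refine ⟨?_, ?_, ?_⟩
  · intro a
    simp only
    have hd : (n:ℤ) ∣ ((-a).val:ℤ) - (-(a.val:ℤ)) :=
      aux_valdvd _ _ (by push_cast; simp [ZMod.natCast_val, ZMod.cast_id])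
    rw [aux_key_sq h1 h2 hd]
    congr 1; ring
  · intro a a' b
    simp only
    rw [polar, polar, polar]
    have hd : (n:ℤ) ∣ (((a+a').val:ℤ)) - ((a.val:ℤ)+(a'.val:ℤ)) :=
      aux_valdvd _ _ (by push_cast; simp [ZMod.natCast_val, ZMod.cast_id])
    rw [aux_key_lin h1 _ hd, ← add_smul]
    congr 1; ring
  · intro a b b'
    simp only
    rw [polar, polar, polar]
    have hd : (n:ℤ) ∣ (((b+b').val:ℤ)) - ((b.val:ℤ)+(b'.val:ℤ)) :=
      aux_valdvd _ _ (by push_cast; simp [ZMod.natCast_val, ZMod.cast_id])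
    rw [show (2*(a.val:ℤ)*(((b+b').val):ℤ)) = 2*(((b+b').val):ℤ)*(a.val:ℤ) by ring,
      aux_key_lin h1 _ hd, ← add_smul]
    congr 1; ring

end AuxQuad

theorem stmt4 (M : Type*) [AddCommGroup M] (n : ℕ) (hn : 0 < n) :
    ∃ e : QuadGroup (ZMod n) M ≃+ torsionBy M (Nat.gcd (2 * n) (n ^ 2)),
      ∀ q : QuadGroup (ZMod n) M, (e q : M) = (q : ZMod n → M) 1 := by
  haveI : NeZero n := ⟨hn.ne'⟩
  have hcond : ∀ m : M, Nat.gcd (2*n) (n^2) • m = 0 →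
      (2*(n:ℤ)) • m = 0 ∧ ((n:ℤ)*(n:ℤ)) • m = 0 := by
    intro m hm
    constructor
    · obtain ⟨c, hc⟩ := Nat.gcd_dvd_left (2*n) (n^2)
      have h : (2*n) • m = 0 := by rw [hc, mul_comm, mul_smul, hm, smul_zero]
      rw [show (2*(n:ℤ)) = ((2*n : ℕ) : ℤ) by push_cast; ring, natCast_zsmul, h]
    · obtain ⟨c, hc⟩ := Nat.gcd_dvd_right (2*n) (n^2)
      have h : (n^2) • m = 0 := by rw [hc, mul_comm, mul_smul, hm, smul_zero]
      rw [show ((n:ℤ)*(n:ℤ)) = ((n^2 : ℕ) : ℤ) by push_cast; ring, natCast_zsmul, h]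
  refine ⟨{
    toFun := fun q => ⟨(q : ZMod n → M) 1, aux_torsion hn q.2⟩
    invFun := fun m => ⟨fun a => ((a.val:ℤ)^2) • (m : M),
      aux_qm_quad (hcond m m.2).1 (hcond m m.2).2⟩
    left_inv := ?_
    right_inv := ?_
    map_add' := ?_ }, fun q => rfl⟩
  · intro q
    apply Subtype.ext
    funext a
    show ((a.val:ℤ)^2) • (q : ZMod n → M) 1 = (q : ZMod n → M) a
    have h := aux_quad_val q.2 a.val
    rw [show ((a.val:ℕ) : ZMod n) = a by simp [ZMod.natCast_val, ZMod.cast_id]] at h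
    rw [h, show ((a.val:ℤ))^2 = ((a.val^2 : ℕ) : ℤ) by push_cast; ring, natCast_zsmul]
  · intro m
    apply Subtype.ext
    show (((1 : ZMod n).val:ℤ)^2) • (m:M) = m
    have hd : (n:ℤ) ∣ (((1:ZMod n).val:ℤ)) - 1 := aux_valdvd 1 1 (by push_cast; ring)
    rw [aux_key_sq (hcond m m.2).1 (hcond m m.2).2 hd, one_pow, one_smul]
  · intro q q'
    rfl
end

section
/- If (h, c) is a 2-abelian 3-cocycle on an abelian group G with coefficients in an abelian group M, then the trace q(x) := c(x,x) defines a quadratic form on G; moreover its associated bilinear form satisfies b_q(y,z) = c(y,z) + c(z,y). -/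
theorem stmt6 {G M : Type*} [AddCommGroup G] [AddCommGroup M]
    (h : G → G → G → M) (c : G → G → M) (hc : IsAb3Cocycle h c) :
    IsQuadratic (fun x => c x x) ∧
    ∀ y z, c (y + z) (y + z) - c y y - c z z = c y z + c z y := by
  obtain ⟨hco, hx1, hx2⟩ := hc
  -- expansion in the second variable
  have lA : ∀ x y z, c x (y + z) = c x z + c x y + h y x z - h y z x - h x y z := by
    intro x y z
    linear_combination (norm := abel) hx1 x y z
  -- expansion in the first variable
  have lB : ∀ x y z, c (x + y) z = c x z + c y z - h x z y + h z x y + h x y z := by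
    intro x y z
    linear_combination (norm := abel) hx2 x y z
  -- the polar form of the trace is c y z + c z y
  have lb : ∀ y z, c (y + z) (y + z) - c y y - c z z = c y z + c z y := by
    intro y z
    have e := hco y z y z
    rw [add_comm z y] at e
    linear_combination (norm := abel) lB y z (y + z) + lA y y z + lA z y z - e
  -- the symmetrized form B(a,b) := c a b + c b a is additive in the first variable
  have Badd1 : ∀ x y z, c (x + y) z + c z (x + y) = (c x z + c z x) + (c y z + c z y) := by
    intro x y z
    linear_combination (norm := abel) lB x y z + lA z x y
  -- hence additive in the second variable as well (it is symmetric)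
  have Badd2 : ∀ x y z, c x (y + z) + c (y + z) x = (c x y + c y x) + (c x z + c z x) := by
    intro x y z
    linear_combination (norm := abel) lA x y z + lB y z x
  -- c 0 0 = 0
  have q0 : c 0 0 = 0 := by
    have h1 := lb 0 0
    have h2 := Badd1 0 0 0
    simp only [add_zero] at h1 h2
    linear_combination (norm := abel) h2 - h1
  -- B(a, 0) = 0
  have Ba0 : ∀ a : G, c a 0 + c 0 a = 0 := by
    intro a
    have := Badd2 a 0 0
    simp only [add_zero] at this
    linear_combination (norm := abel) -this
  -- evenness: c (-a) (-a) = c a a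
  have even : ∀ a : G, c (-a) (-a) = c a a := by
    intro a
    have h1 := lb a (-a)
    have h2 := Badd2 a (-a) a
    simp only [neg_add_cancel, add_neg_cancel] at h1 h2
    have h3 := Ba0 a
    have h4 := lb a a
    simp only [q0] at h1
    -- h2 : c a 0 + c 0 a = (c a (-a) + c (-a) a) + (c a a + c a a)
    -- h1 : - c a a - c (-a) (-a) = c a (-a) + c (-a) a
    linear_combination (norm := abel) -h1 + h2 - h3
  refine ⟨⟨even, ?_, ?_⟩, lb⟩
  · intro a a' b
    simp only
    have e1 := lb (a + a') b
    have e2 := lb a b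
    have e3 := lb a' b
    have e4 := Badd1 a a' b
    have e5 := lb a a'
    linear_combination (norm := abel) e1 - e2 - e3 + e4
  · intro a b b'
    simp only
    have e1 := lb a (b + b')
    have e2 := lb a b
    have e3 := lb a b'
    have e4 := Badd2 a b b'
    have e5 := lb b b'
    linear_combination (norm := abel) e1 - e2 - e3 + e4
end

section
/- If (h,c) is a 2-abelian 3-cocycle on G with coefficients in M, then the symmetrization S(x,y) := c(x,y) + c(y,x) is a bilinear (biadditive) map G × G → M. -/
theorem stmt7 {G M : Type*} [AddCommGroup G] [AddCommGroup M]
    (h : G → G → G → M) (c : G → G → M) (hc : IsAb3Cocycle h c) :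
    IsBiadd (fun x y => c x y + c y x) := by
  obtain ⟨_, hx, hy⟩ := hc
  constructor
  · intro a a' b
    have e1 := hy a a' b
    have e2 := hx b a a'
    have key := congrArg₂ (· + ·) e1 e2
    simp only [] at key ⊢
    abel_nf at key ⊢
    exact key
  · intro a b b'
    have e1 := hx a b b'
    have e2 := hy b b' a
    have key := congrArg₂ (· + ·) e1 e2
    simp only [] at key ⊢
    abel_nf at key ⊢
    exact key
end

section
/- If (h₁,c₁) and (h₂,c₂) are 2-abelian 3-cocycles on G₁ and G₂ respectively with coefficients in M, and f : G₁ × G₂ → M is biadditive, then (h,c) defined by h((x₁,y₁),(x₂,y₂),(x₃,y₃)) = h₁(x₁,x₂,x₃) + h₂(y₁,y₂,y₃) and c((x₁,y₁),(x₂,y₂)) = c₁(x₁,x₂) + c₂(y₁,y₂) + f(x₁,y₂) is a 2-abelian 3-cocycle on G₁ ⊕ G₂, and its trace satisfies c((x,y),(x,y)) = c₁(x,x) + c₂(y,y) + f(x,y). -/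
theorem stmt11 {G₁ G₂ M : Type*} [AddCommGroup G₁] [AddCommGroup G₂] [AddCommGroup M]
    (h₁ : G₁ → G₁ → G₁ → M) (c₁ : G₁ → G₁ → M) (hc₁ : IsAb3Cocycle h₁ c₁)
    (h₂ : G₂ → G₂ → G₂ → M) (c₂ : G₂ → G₂ → M) (hc₂ : IsAb3Cocycle h₂ c₂)
    (f : G₁ → G₂ → M) (hf : IsBiadd f) :
    IsAb3Cocycle
      (fun p q r : G₁ × G₂ => h₁ p.1 q.1 r.1 + h₂ p.2 q.2 r.2)
      (fun p q : G₁ × G₂ => c₁ p.1 q.1 + c₂ p.2 q.2 + f p.1 q.2) ∧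
    ∀ (x : G₁) (y : G₂),
      (fun p q : G₁ × G₂ => c₁ p.1 q.1 + c₂ p.2 q.2 + f p.1 q.2) (x, y) (x, y) =
        c₁ x x + c₂ y y + f x y := by
  obtain ⟨H1, P1, Q1⟩ := hc₁
  obtain ⟨H2, P2, Q2⟩ := hc₂
  obtain ⟨fl, fr⟩ := hf
  refine ⟨⟨?_, ?_, ?_⟩, ?_⟩
  · intro a b d e
    have e := congrArg₂ (· + ·) (H1 a.1 b.1 d.1 e.1) (H2 a.2 b.2 d.2 e.2)
    simp only [Prod.fst_add, Prod.snd_add]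
    abel_nf at e ⊢
    exact e
  · intro x y z
    have e := congrArg₂ (· + ·) (congrArg₂ (· + ·) (P1 x.1 y.1 z.1) (P2 x.2 y.2 z.2))
      (fr x.1 y.2 z.2)
    simp only [Prod.fst_add, Prod.snd_add]
    abel_nf at e ⊢
    exact e
  · intro x y z
    have e := congrArg₂ (· + ·) (congrArg₂ (· + ·) (Q1 x.1 y.1 z.1) (Q2 x.2 y.2 z.2))
      (fl x.1 y.1 z.2)
    simp only [Prod.fst_add, Prod.snd_add]
    abel_nf at e ⊢
    exact e
  · intro x y; rfl
end

section
/- For n a positive integer and m ∈ M with gcd(2n, n²)·m = 0, the pair (h_{nm}, c_m), where c_m(x,y) = x·y·m for representatives 0 ≤ x,y < n, and h_{nm}(x,y,z) = x·n·m if y+z ≥ n (as integers with 0 ≤ y,z < n) and 0 otherwise, is a 2-abelian 3-cocycle on ℤ/nℤ with coefficients in M. -/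
namespace Stmt12Aux

variable {n : ℕ} [NeZero n]

/-- Integer carry of adding two elements of `ZMod n` (via canonical representatives). -/
def ch (x y : ZMod n) : ℤ := if n ≤ x.val + y.val then 1 else 0

omit [NeZero n] in
lemma ch_comm (x y : ZMod n) : ch x y = ch y x := by unfold ch; rw [Nat.add_comm]

lemma val_add_int (x y : ZMod n) :
    ((x + y).val : ℤ) = x.val + y.val - n * ch x y := by
  have hx := ZMod.val_lt x
  have hy := ZMod.val_lt y
  have hn := Nat.pos_of_ne_zero (NeZero.ne n)
  rw [ZMod.val_add]
  unfold ch
  split_ifs with h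
  · have : (x.val + y.val) % n = x.val + y.val - n := by
      rw [Nat.mod_eq_sub_mod h, Nat.mod_eq_of_lt (by omega)]
    rw [this]
    push_cast [Nat.cast_sub h]
    ring
  · rw [Nat.mod_eq_of_lt (by omega)]
    push_cast
    ring

lemma ch_cocycle (b d e : ZMod n) :
    ch b d + ch (b + d) e = ch d e + ch b (d + e) := by
  have h1 := val_add_int (b + d) e
  have h2 := val_add_int b d
  have h3 := val_add_int b (d + e)
  have h4 := val_add_int d e
  rw [add_assoc] at h1
  have hn : (n : ℤ) ≠ 0 := by exact_mod_cast NeZero.ne n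
  have key : (n : ℤ) * (ch b d + ch (b + d) e) = n * (ch d e + ch b (d + e)) := by
    linarith [h1, h2, h3, h4]
  exact mul_left_cancel₀ hn key

variable {M : Type*} [AddCommGroup M]

omit [NeZero n] in
lemma h_eq (m : M) (x y z : ZMod n) :
    (if n ≤ y.val + z.val then (x.val * n) • m else 0)
      = ((x.val : ℤ) * n * ch y z) • m := by
  unfold ch
  split_ifs with h
  · rw [mul_one, ← natCast_zsmul]; push_cast; ring_nf
  · rw [mul_zero, zero_smul]

omit [NeZero n] in
lemma c_eq (m : M) (x y : ZMod n) :
    (x.val * y.val) • m = ((x.val : ℤ) * y.val) • m := by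
  rw [← natCast_zsmul]; push_cast; ring_nf

end Stmt12Aux

open Stmt12Aux in
theorem stmt12 (M : Type*) [AddCommGroup M] (n : ℕ) [NeZero n] (m : M)
    (hm : Nat.gcd (2 * n) (n ^ 2) • m = 0) :
    IsAb3Cocycle
      (fun x y z : ZMod n => if n ≤ y.val + z.val then (x.val * n) • m else 0)
      (fun x y : ZMod n => (x.val * y.val) • m) := by
  -- n² • m = 0 and (2n) • m = 0
  have hn2 : ((n : ℤ) ^ 2) • m = 0 := by
    obtain ⟨k, hk⟩ := Nat.gcd_dvd_right (2 * n) (n ^ 2)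
    have : (n ^ 2 : ℕ) • m = 0 := by
      rw [hk, mul_nsmul, hm, smul_zero]
    calc ((n : ℤ) ^ 2) • m = ((n ^ 2 : ℕ) : ℤ) • m := by push_cast; ring_nf
      _ = (n ^ 2 : ℕ) • m := natCast_zsmul m _
      _ = 0 := this
  have h2n : ((2 * n : ℤ)) • m = 0 := by
    obtain ⟨k, hk⟩ := Nat.gcd_dvd_left (2 * n) (n ^ 2)
    have : (2 * n : ℕ) • m = 0 := by
      rw [hk, mul_nsmul, hm, smul_zero]
    calc ((2 * n : ℤ)) • m = ((2 * n : ℕ) : ℤ) • m := by push_cast; ring_nf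
      _ = (2 * n : ℕ) • m := natCast_zsmul m _
      _ = 0 := this
  have key : ∀ (P Q s t : ℤ), P = Q + s * n ^ 2 + t * (2 * n) → P • m = Q • m := by
    intro P Q s t hPQ
    rw [hPQ, add_zsmul, add_zsmul, mul_zsmul, mul_zsmul, hn2, h2n, smul_zero, smul_zero,
      add_zero, add_zero]
  refine ⟨?_, ?_, ?_⟩
  · intro a b d e
    simp only [h_eq m]
    simp only [sub_eq_add_neg, ← neg_zsmul, ← add_zsmul]
    refine key _ _ (ch a b * ch d e) 0 ?_
    have hcoc := ch_cocycle b d e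
    have hval := val_add_int a b
    linear_combination ((a.val : ℤ) * n) * hcoc - ((n : ℤ) * ch d e) * hval
  · intro x y z
    simp only [h_eq m, c_eq m]
    simp only [sub_eq_add_neg, ← neg_zsmul, ← add_zsmul]
    refine key _ _ 0 0 ?_
    have hval := val_add_int y z
    have hcomm := ch_comm z x
    linear_combination (x.val : ℤ) * hval + ((y.val : ℤ) * n) * hcomm
  · intro x y z
    simp only [h_eq m, c_eq m]
    simp only [sub_eq_add_neg, ← neg_zsmul, ← add_zsmul]
    refine key _ _ 0 (-((z.val : ℤ) * ch x y)) ?_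
    have hval := val_add_int x y
    have hcomm := ch_comm y z
    linear_combination (z.val : ℤ) * hval - ((x.val : ℤ) * n) * hcomm
end

section
/- A quadratic form q : ℤ/2^kℤ → M (k ≥ 1) is the trace of a biadditive form (i.e., there exists biadditive c : (ℤ/2^kℤ)² → M with q(x) = c(x,x)) if and only if 2^k · q(1) = 0. -/
lemma biadd_zero_left {A B M : Type*} [AddCommGroup A] [AddCommGroup B] [AddCommGroup M]
    {f : A → B → M} (h : IsBiadd f) (b : B) : f 0 b = 0 := by
  have := h.1 0 0 b
  simp only [add_zero] at this
  exact (right_eq_add.mp this)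

lemma biadd_nsmul_left {A B M : Type*} [AddCommGroup A] [AddCommGroup B] [AddCommGroup M]
    {f : A → B → M} (h : IsBiadd f) (n : ℕ) (a : A) (b : B) :
    f (n • a) b = n • f a b := by
  induction n with
  | zero => simpa using biadd_zero_left h b
  | succ n ih =>
    rw [succ_nsmul, succ_nsmul, h.1, ih]

lemma quad_zero {G M : Type*} [AddCommGroup G] [AddCommGroup M] {q : G → M}
    (hq : IsQuadratic q) : q 0 = 0 := by
  have h0 : q (0 + 0) - q 0 - q 0 = 0 := biadd_zero_left hq.2 (0 : G)
  simp only [add_zero] at h0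
  linear_combination (norm := abel) -h0

lemma quad_diag {G M : Type*} [AddCommGroup G] [AddCommGroup M] {q : G → M}
    (hq : IsQuadratic q) (a : G) :
    q (a + a) - q a - q a = 2 • q a := by
  have h1 := hq.2.2 a a (-a)
  simp only [add_neg_cancel, add_zero] at h1
  rw [quad_zero hq, hq.1 a] at h1
  -- h1 : q a - q a - 0 = (q (a+a) - q a - q a) + (0 - q a - q a)
  have h2 : (2:ℕ) • q a = q a + q a := two_nsmul (q a)
  rw [h2]
  linear_combination (norm := abel) -h1

lemma quad_nsmul {G M : Type*} [AddCommGroup G] [AddCommGroup M] {q : G → M}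
    (hq : IsQuadratic q) (n : ℕ) (a : G) : q (n • a) = (n * n) • q a := by
  induction n with
  | zero => simpa using quad_zero hq
  | succ n ih =>
    have hB := biadd_nsmul_left hq.2 n a a
    rw [quad_diag hq a] at hB
    have hstep : q ((n+1) • a) = q (n • a) + q a + n • (2 • q a) := by
      rw [succ_nsmul]
      linear_combination (norm := abel) hB
    rw [hstep, ih]
    have harith : (n+1) * (n+1) = n * n + (1 + n * 2) := by ring
    rw [harith, add_smul, add_smul, one_smul, mul_smul n 2]
    abel

theorem stmt14 (M : Type*) [AddCommGroup M] (k : ℕ) (hk : 1 ≤ k)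
    (q : ZMod (2 ^ k) → M) (hq : IsQuadratic q) :
    (∃ c : ZMod (2 ^ k) → ZMod (2 ^ k) → M, IsBiadd c ∧ ∀ x, q x = c x x) ↔
      (2 ^ k) • q 1 = 0 := by
  have hnpos : 0 < 2 ^ k := Nat.pow_pos (by norm_num)
  haveI : NeZero (2 ^ k) := ⟨hnpos.ne'⟩
  constructor
  · rintro ⟨c, hc, hqc⟩
    have h1 : ((2 ^ k) • (1 : ZMod (2 ^ k))) = 0 := by
      simp [nsmul_eq_mul]
    have h2 : c ((2 ^ k) • (1 : ZMod (2 ^ k))) 1 = (2 ^ k) • c 1 1 :=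
      biadd_nsmul_left hc _ 1 1
    rw [h1, biadd_zero_left hc] at h2
    rw [hqc 1]
    exact h2.symm
  · intro h
    have hmod : ∀ m : ℕ, m • q 1 = (m % 2 ^ k) • q 1 := by
      intro m
      conv_lhs => rw [← Nat.div_add_mod m (2 ^ k), Nat.mul_comm]
      rw [add_smul, mul_smul, h, smul_zero, zero_add]
    have key : ∀ m m' : ℕ, m ≡ m' [MOD 2 ^ k] → m • q 1 = m' • q 1 := by
      intro m m' e
      rw [hmod m, hmod m', e]
    refine ⟨fun x y => (x.val * y.val) • q 1, ⟨?_, ?_⟩, ?_⟩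
    · intro a a' b
      show ((a + a').val * b.val) • q 1 = (a.val * b.val) • q 1 + (a'.val * b.val) • q 1
      rw [← add_smul, ← add_mul]
      refine key _ _ (Nat.ModEq.mul_right b.val ?_)
      rw [ZMod.val_add]
      exact Nat.mod_modEq _ _
    · intro a b b'
      show (a.val * (b + b').val) • q 1 = (a.val * b.val) • q 1 + (a.val * b'.val) • q 1
      rw [← add_smul, ← mul_add]
      refine key _ _ (Nat.ModEq.mul_left a.val ?_)
      rw [ZMod.val_add]
      exact Nat.mod_modEq _ _
    · intro x
      show q x = (x.val * x.val) • q 1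
      have hval : x.val • (1 : ZMod (2 ^ k)) = x := by
        rw [nsmul_eq_mul, mul_one, ZMod.natCast_val, ZMod.cast_id]
      have := quad_nsmul hq x.val (1 : ZMod (2 ^ k))
      rw [hval] at this
      exact this
end

section
/- Every additive quadratic form q ∈ Hom(G, M[2]) is the trace of a skew-symmetric-type biadditive form: there exists a biadditive c : G × G → M with c(x,x) = q(x) for all x. In particular, for G finitely generated this follows from the criterion |x|·q(x) = 0 for all x in the 2-torsion subgroup of G. -/
theorem stmt18 {G M : Type*} [AddCommGroup G] [AddCommGroup M]
    (q : G →+ M) (hq2 : ∀ x, 2 • q x = 0) :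
    ∃ c : G → G → M, IsBiadd c ∧ ∀ x, c x x = q x := by
  classical
  -- the subgroup 2G
  set H : AddSubgroup G :=
    { carrier := Set.range (fun y : G => 2 • y)
      add_mem' := by
        rintro _ _ ⟨a, rfl⟩ ⟨b, rfl⟩
        exact ⟨a + b, smul_add 2 a b⟩
      zero_mem' := ⟨0, by simp⟩
      neg_mem' := by
        rintro _ ⟨a, rfl⟩
        exact ⟨-a, smul_neg 2 a⟩ } with hHdef
  -- the subgroup M[2]
  set N : AddSubgroup M :=
    { carrier := {m : M | 2 • m = 0}
      add_mem' := by
        intro a b ha hb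
        simp only [Set.mem_setOf_eq] at *
        rw [smul_add, ha, hb, add_zero]
      zero_mem' := by simp
      neg_mem' := by
        intro a ha
        simp only [Set.mem_setOf_eq] at *
        rw [smul_neg, ha, neg_zero] } with hNdef
  letI : Module (ZMod 2) (G ⧸ H) := QuotientAddGroup.zmodModule (fun x => ⟨x, rfl⟩)
  letI : Module (ZMod 2) N := AddCommGroup.zmodModule (n := 2) (fun x => by
    ext
    exact x.2)
  -- q, corestricted to N
  let q' : G →+ N := q.codRestrict N (fun x => hq2 x)
  -- q descends to G/2G
  have hker : ∀ x ∈ H, q' x = 0 := by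
    rintro _ ⟨y, rfl⟩
    ext
    show q (2 • y) = 0
    rw [map_nsmul]
    exact hq2 y
  let qbar : G ⧸ H →+ N := QuotientAddGroup.lift H q' hker
  let qlin : (G ⧸ H) →ₗ[ZMod 2] N := qbar.toZModLinearMap 2
  -- a basis of G/2G over ℤ/2
  let b := Module.Basis.ofVectorSpace (ZMod 2) (G ⧸ H)
  -- the bilinear form on G/2G
  let L : (G ⧸ H) →ₗ[ZMod 2] (G ⧸ H) →ₗ[ZMod 2] N :=
    b.constr (ZMod 2) (fun i => (b.coord i).smulRight (qlin (b i)))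
  have hsq : ∀ c : ZMod 2, c * c = c := by decide
  have hdiag : ∀ u : G ⧸ H, L u u = qlin u := by
    intro u
    have h1 : L u u
        = (b.repr u).sum fun i c =>
            (c • ((b.coord i).smulRight (qlin (b i)))) u := by
      rw [show L u = b.constr (ZMod 2)
            (fun i => (b.coord i).smulRight (qlin (b i))) u from rfl,
          Module.Basis.constr_apply]
      exact map_finsuppSum (LinearMap.applyₗ u) _ _
    have h2 : ∀ i ∈ (b.repr u).support,
        (((b.repr u) i) • ((b.coord i).smulRight (qlin (b i)))) u
          = (b.repr u) i • qlin (b i) := by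
      intro i _
      simp only [LinearMap.smul_apply, LinearMap.smulRight_apply, Module.Basis.coord_apply,
        smul_smul, hsq]
    have h3 : (L u) u = (b.repr u).sum fun i c => c • qlin (b i) := by
      rw [h1, Finsupp.sum, Finsupp.sum]
      exact Finset.sum_congr rfl h2
    have h4 : ((b.repr u).sum fun i c => c • qlin (b i))
        = qlin ((b.repr u).sum fun i c => c • b i) := by
      rw [map_finsuppSum, Finsupp.sum, Finsupp.sum]
      exact Finset.sum_congr rfl fun i _ => (map_smul qlin _ _).symm
    rw [h3, h4]
    congr 1
    simpa [Finsupp.linearCombination_apply] using b.linearCombination_repr u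
  refine ⟨fun x y => (L (QuotientAddGroup.mk x) (QuotientAddGroup.mk y) : M), ⟨?_, ?_⟩, ?_⟩
  · intro a a' x
    change ((L ((a + a' : G) : G ⧸ H)) (x : G ⧸ H) : M)
      = ((L (a : G ⧸ H)) (x : G ⧸ H) : M) + ((L (a' : G ⧸ H)) (x : G ⧸ H) : M)
    rw [show ((a + a' : G) : G ⧸ H) = (a : G ⧸ H) + (a' : G ⧸ H) from rfl, map_add,
      LinearMap.add_apply, AddSubgroup.coe_add]
  · intro a x x'
    change ((L (a : G ⧸ H)) ((x + x' : G) : G ⧸ H) : M)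
      = ((L (a : G ⧸ H)) (x : G ⧸ H) : M) + ((L (a : G ⧸ H)) (x' : G ⧸ H) : M)
    rw [show ((x + x' : G) : G ⧸ H) = (x : G ⧸ H) + (x' : G ⧸ H) from rfl, map_add,
      AddSubgroup.coe_add]
  · intro x
    change ((L (x : G ⧸ H)) (x : G ⧸ H) : M) = q x
    rw [hdiag]
    rfl
end
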